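/- Suppose the partition {Ω_j} has spectral gap at least Λ > 0. Then for every f ∈ ℓ²(V) whose weighted gradient norm ‖∇f‖ is finite and every α > 0, ‖f‖² ≤ ((1+α)/α)·(1/Λ)·‖∇f‖² + (1+α)·∑_j |⟨f, ξ_j⟩|². -/

import Mathlib

open Finset

theorem block_id {V : Type*} (s : Finset V) (hs : s.Nonempty) (f : V → ℂ) :
    ∑ v ∈ s, ‖f v - (s.card : ℂ)⁻¹ * ∑ u ∈ s, f u‖ ^ 2
      = (∑ v ∈ s, ‖f v‖ ^ 2) - (s.card : ℝ)⁻¹ * ‖∑ u ∈ s, f u‖ ^ 2 := by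
  set S : ℂ := ∑ u ∈ s, f u with hS
  set m : ℂ := (s.card : ℂ)⁻¹ * S with hm
  have hcard : (0:ℝ) < s.card := by exact_mod_cast Finset.card_pos.mpr hs
  have key : ∀ v, ‖f v - m‖ ^ 2
      = ‖f v‖ ^ 2 - 2 * (starRingEnd ℂ (f v) * m).re + ‖m‖ ^ 2 := by
    intro v
    have := @norm_sub_sq ℂ ℂ _ _ _ (f v) m
    simp [RCLike.inner_apply] at this ⊢
    rw [this]; ring
  have h2 : ((starRingEnd ℂ) S * m).re = (s.card:ℝ)⁻¹ * ‖S‖^2 := by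
    rw [hm, show (starRingEnd ℂ) S * ((s.card:ℂ)⁻¹ * S)
        = ((s.card:ℕ):ℂ)⁻¹ * (S * (starRingEnd ℂ) S) by ring, Complex.mul_conj]
    simp [Complex.normSq_eq_norm_sq, ← Complex.ofReal_natCast, ← Complex.ofReal_inv,
      ← Complex.ofReal_pow, ← Complex.ofReal_mul]
  have h3 : ‖m‖^2 = ((s.card:ℝ)⁻¹)^2 * ‖S‖^2 := by
    rw [hm, norm_mul, mul_pow, norm_inv]
    norm_num
  rw [Finset.sum_congr rfl fun v _ => key v]
  rw [Finset.sum_add_distrib, Finset.sum_sub_distrib]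
  have h1 : ∑ x ∈ s, 2 * ((starRingEnd ℂ) (f x) * m).re = 2 * ((s.card:ℝ)⁻¹ * ‖S‖^2) := by
    rw [← Finset.mul_sum, ← Complex.re_sum, ← Finset.sum_mul, ← map_sum, ← hS, h2]
  rw [h1, Finset.sum_const, nsmul_eq_mul, h3]
  field_simp
  ring

/-- Let `(V, w)` be a weighted graph on a countable vertex set and
`{Ω_j}_{j∈J}` a partition of `V` into nonempty finite subsets with spectral gap at
least `Λ > 0`.  Then for every `f ∈ ℓ²(V)` with finite weighted gradient norm and
every `α > 0`,
`‖f‖² ≤ ((1+α)/α)·(1/Λ)·‖∇f‖² + (1+α)·∑_j |⟨f, ξ_j⟩|²`,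
where `⟨f, ξ_j⟩ = |Ω_j|^{-1/2}·∑_{v∈Ω_j} f(v)`. -/
theorem stmt_10 {V : Type*} [Countable V] {J : Type*} (w : V → V → ℝ)
    (hsymm : ∀ u v, w u v = w v u) (hnn : ∀ u v, 0 ≤ w u v)
    (hdiag : ∀ v, w v v = 0)
    (Ω : J → Finset V) (hne : ∀ j, (Ω j).Nonempty)
    (hdisj : ∀ i j, i ≠ j → Disjoint (Ω i) (Ω j)) (hcover : ∀ v : V, ∃ j, v ∈ Ω j)
    (Λ : ℝ) (hΛ : 0 < Λ)
    (hgap : ∀ j, ∀ g : V → ℂ, ∑ v ∈ Ω j, g v = 0 →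
      Λ * ∑ v ∈ Ω j, ‖g v‖ ^ 2 ≤
        1 / 2 * ∑ u ∈ Ω j, ∑ v ∈ Ω j, ‖g u - g v‖ ^ 2 * w u v)
    (f : V → ℂ) (hf : Summable fun v => ‖f v‖ ^ 2)
    (hgrad : Summable fun p : V × V => ‖f p.1 - f p.2‖ ^ 2 * w p.1 p.2)
    (α : ℝ) (hα : 0 < α) :
    ∑' v, ‖f v‖ ^ 2 ≤
      ((1 + α) / α) * (1 / Λ) *
          (1 / 2 * ∑' p : V × V, ‖f p.1 - f p.2‖ ^ 2 * w p.1 p.2) +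
        (1 + α) * ∑' j, ((Ω j).card : ℝ)⁻¹ * ‖∑ v ∈ Ω j, f v‖ ^ 2 := by
  classical
  set A : J → ℝ := fun j => ∑ v ∈ Ω j, ‖f v‖ ^ 2 with hA
  set B : J → ℝ := fun j => ((Ω j).card : ℝ)⁻¹ * ‖∑ v ∈ Ω j, f v‖ ^ 2 with hB
  set G : J → ℝ := fun j => 1 / 2 * ∑ u ∈ Ω j, ∑ v ∈ Ω j, ‖f u - f v‖ ^ 2 * w u v with hG
  set h : V × V → ℝ := fun p => ‖f p.1 - f p.2‖ ^ 2 * w p.1 p.2 with hh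
  have hh0 : ∀ p, 0 ≤ h p := fun p => mul_nonneg (sq_nonneg _) (hnn _ _)
  -- key per-block inequalities
  have hgapj : ∀ j, Λ * (A j - B j) ≤ G j := by
    intro j
    set m : ℂ := ((Ω j).card : ℂ)⁻¹ * ∑ u ∈ Ω j, f u with hm
    have hcard : ((Ω j).card : ℂ) ≠ 0 := by
      exact_mod_cast (Finset.card_pos.mpr (hne j)).ne'
    have hz : ∑ v ∈ Ω j, (f v - m) = 0 := by
      rw [Finset.sum_sub_distrib, Finset.sum_const, nsmul_eq_mul, hm]
      field_simp
      ring
    have H := hgap j (fun v => f v - m) hz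
    simp only [sub_sub_sub_cancel_right] at H
    rw [hm, block_id (Ω j) (hne j) f] at H
    exact H
  have hBA : ∀ j, B j ≤ A j := by
    intro j
    have h0 : 0 ≤ A j - B j := by
      rw [← block_id (Ω j) (hne j) f]
      exact Finset.sum_nonneg fun v _ => sq_nonneg _
    linarith
  have hB0 : ∀ j, 0 ≤ B j := fun j => mul_nonneg (by positivity) (sq_nonneg _)
  have hG0 : ∀ j, 0 ≤ G j := fun j => by
    apply mul_nonneg (by norm_num)
    exact Finset.sum_nonneg fun u _ => Finset.sum_nonneg fun v _ => hh0 (u, v)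
  -- partition machinery: sigma type for vertices
  let e : (Σ j, (Ω j : Finset V)) → V := fun x => x.2.1
  have he : Function.Injective e := by
    rintro ⟨i, v, hv⟩ ⟨j, u, hu⟩ hvu
    simp only [e] at hvu
    subst hvu
    have hij : i = j := by
      by_contra hij
      exact Finset.disjoint_left.mp (hdisj i j hij) hv hu
    subst hij; rfl
  have heS : Function.Surjective e := fun v => by
    obtain ⟨j, hj⟩ := hcover v
    exact ⟨⟨j, v, hj⟩, rfl⟩
  have hfs : Summable fun x : Σ j, (Ω j : Finset V) => ‖f (e x)‖ ^ 2 :=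
    hf.comp_injective he
  have hA_eq : ∀ j, A j = ∑' v : (Ω j : Finset V), ‖f v.1‖ ^ 2 := fun j =>
    (Finset.tsum_subtype (Ω j) (fun v => ‖f v‖ ^ 2)).symm
  have hAsum : Summable A := hfs.sigma.congr fun j => (hA_eq j).symm
  have htsumA : ∑' v, ‖f v‖ ^ 2 = ∑' j, A j := by
    have h1 : ∑' v, ‖f v‖ ^ 2 = ∑' x : Σ j, (Ω j : Finset V), ‖f (e x)‖ ^ 2 :=
      ((Equiv.ofBijective e ⟨he, heS⟩).tsum_eq (fun v => ‖f v‖ ^ 2)).symm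
    rw [h1, hfs.tsum_sigma]
    exact tsum_congr fun j => (hA_eq j).symm
  -- pairs
  let e2 : (Σ j, ((Ω j ×ˢ Ω j : Finset (V × V)) : Finset (V × V))) → V × V :=
    fun x => x.2.1
  have he2 : Function.Injective e2 := by
    rintro ⟨i, p, hp⟩ ⟨j, q, hq⟩ hpq
    simp only [e2] at hpq
    subst hpq
    have hij : i = j := by
      by_contra hij
      exact Finset.disjoint_left.mp (hdisj i j hij)
        (Finset.mem_product.mp hp).1 (Finset.mem_product.mp hq).1
    subst hij; rfl
  have hhs : Summable fun x : Σ j, ((Ω j ×ˢ Ω j : Finset (V × V)) : Finset (V × V)) =>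
      h (e2 x) := hgrad.comp_injective he2
  have hP_eq : ∀ j, (∑ p ∈ Ω j ×ˢ Ω j, h p)
      = ∑' p : ((Ω j ×ˢ Ω j : Finset (V × V)) : Finset (V × V)), h p.1 := fun j =>
    (Finset.tsum_subtype _ h).symm
  have hPsum : Summable fun j => ∑ p ∈ Ω j ×ˢ Ω j, h p :=
    hhs.sigma.congr fun j => (hP_eq j).symm
  have hPle : ∑' j, ∑ p ∈ Ω j ×ˢ Ω j, h p ≤ ∑' p, h p := by
    rw [tsum_congr hP_eq, ← hhs.tsum_sigma]
    exact Summable.tsum_le_tsum_of_inj e2 he2 (fun c _ => hh0 c) (fun b => le_refl _) hhs hgrad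
  have hGP : ∀ j, G j = 1 / 2 * ∑ p ∈ Ω j ×ˢ Ω j, h p := fun j => by
    rw [Finset.sum_product]
  have hGsum : Summable G := (hPsum.mul_left (1 / 2)).congr fun j => (hGP j).symm
  have hGle : ∑' j, G j ≤ 1 / 2 * ∑' p, h p := by
    rw [tsum_congr hGP, tsum_mul_left]
    have := hPle
    nlinarith [hPle]
  have hBsum : Summable B := Summable.of_nonneg_of_le hB0 hBA hAsum
  -- combine
  have hstep : ∀ j, A j ≤ Λ⁻¹ * G j + B j := fun j => by
    have := hgapj j
    have h2 : A j - B j ≤ Λ⁻¹ * G j := by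
      rw [inv_mul_eq_div, le_div_iff₀ hΛ]
      calc (A j - B j) * Λ = Λ * (A j - B j) := mul_comm _ _
        _ ≤ G j := hgapj j
    linarith
  have hsum2 : Summable fun j => Λ⁻¹ * G j + B j := (hGsum.mul_left Λ⁻¹).add hBsum
  have main : ∑' j, A j ≤ Λ⁻¹ * ∑' j, G j + ∑' j, B j := by
    calc ∑' j, A j ≤ ∑' j, (Λ⁻¹ * G j + B j) := Summable.tsum_le_tsum hstep hAsum hsum2
      _ = Λ⁻¹ * ∑' j, G j + ∑' j, B j := by
          rw [Summable.tsum_add (hGsum.mul_left Λ⁻¹) hBsum, tsum_mul_left]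
  have hX0 : 0 ≤ 1 / 2 * ∑' p, h p := by
    have : 0 ≤ ∑' p, h p := tsum_nonneg hh0
    linarith
  have hY0 : 0 ≤ ∑' j, B j := tsum_nonneg hB0
  have hc1 : (1 : ℝ) ≤ (1 + α) / α := by
    rw [le_div_iff₀ hα]; linarith
  have hc2 : (1 : ℝ) ≤ 1 + α := by linarith
  have hΛi : 0 ≤ Λ⁻¹ := by positivity
  calc ∑' v, ‖f v‖ ^ 2 = ∑' j, A j := htsumA
    _ ≤ Λ⁻¹ * ∑' j, G j + ∑' j, B j := main
    _ ≤ Λ⁻¹ * (1 / 2 * ∑' p, h p) + ∑' j, B j := by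
        have := mul_le_mul_of_nonneg_left hGle hΛi
        linarith
    _ ≤ ((1 + α) / α) * (1 / Λ) * (1 / 2 * ∑' p, h p) + (1 + α) * ∑' j, B j := by
        have h1 : Λ⁻¹ * (1 / 2 * ∑' p, h p) ≤ ((1 + α) / α) * (1 / Λ) * (1 / 2 * ∑' p, h p) := by
          apply mul_le_mul_of_nonneg_right _ hX0
          rw [one_div]
          nlinarith
        have h2 : ∑' j, B j ≤ (1 + α) * ∑' j, B j := by nlinarith
        linarith
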